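/- Let X, Y be finite sets, P_X a pmf on X, d : X × Y → [0,∞) a distortion measure such that for every x there exists y with d(x,y)=0, and Δ ≥ 0, R ≥ 0. Define G_CK(R,Δ|P_X) = min over pmfs q_X of { D(q_X‖P_X) + |R(Δ|q_X) − R|⁺ } where R(Δ|q_X) = min over conditional distributions q_{Y|X} with E_{q_{XY}}[d(X,Y)] ≤ Δ of I(q_X, q_{Y|X}); and define G̃_CK(R,Δ|P_X) = min over joint pmfs q_{XY} with E_{q_{XY}}[d(X,Y)] ≤ Δ of { D(q_X‖P_X) + |I(q_X, q_{Y|X}) − R|⁺ }. Then G_CK(R,Δ|P_X) = G̃_CK(R,Δ|P_X). -/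

import Mathlib

open Finset Real

lemma self_mul_log_lb {a : ℝ} (ha : 0 < a) : a - 1 ≤ a * Real.log a := by
  have h := Real.log_le_sub_one_of_pos (show (0:ℝ) < a⁻¹ by positivity)
  rw [Real.log_inv] at h
  have := mul_le_mul_of_nonneg_left h ha.le
  rw [mul_sub] at this
  have hainv : a * a⁻¹ = 1 := mul_inv_cancel₀ ha.ne'
  nlinarith

lemma term_lb1 (a b : ℝ) (ha0 : 0 ≤ a) (hb0 : 0 ≤ b) (hb1 : b ≤ 1) :
    -1 ≤ a * Real.log (a / b) := by
  rcases ha0.eq_or_lt with h | h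
  · rw [← h, zero_mul]; norm_num
  rcases hb0.eq_or_lt with hb | hb
  · rw [← hb, div_zero, Real.log_zero, mul_zero]; norm_num
  rw [Real.log_div h.ne' hb.ne']
  have h1 := self_mul_log_lb h
  have h2 : Real.log b ≤ 0 := Real.log_nonpos hb0 hb1
  nlinarith

lemma term_lb2 (c k b : ℝ) (hc : 0 ≤ c) (hc1 : c ≤ 1) (hk : 0 ≤ k)
    (hb : c * k ≤ b) (hb1 : b ≤ 1) : -1 ≤ c * k * Real.log (k / b) := by
  rcases hc.eq_or_lt with h | h
  · rw [← h]; norm_num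
  rcases hk.eq_or_lt with h' | h'
  · rw [← h']; norm_num
  have hbpos : 0 < b := lt_of_lt_of_le (mul_pos h h') hb
  rw [Real.log_div h'.ne' hbpos.ne']
  have h1 := self_mul_log_lb h'
  have h2 : Real.log b ≤ 0 := Real.log_nonpos hbpos.le hb1
  nlinarith [mul_le_mul_of_nonneg_left h1 h.le,
    mul_nonneg (mul_nonneg h.le h'.le) (neg_nonneg.2 h2)]


theorem stmt_12 {X Y : Type*} [Fintype X] [Fintype Y] [Nonempty X] [Nonempty Y]
    (P : X → ℝ) (hP0 : ∀ x, 0 ≤ P x) (hP1 : ∑ x, P x = 1)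
    (d : X → Y → ℝ) (hd0 : ∀ x y, 0 ≤ d x y) (hd : ∀ x, ∃ y, d x y = 0)
    (Δ R : ℝ) (hΔ : 0 ≤ Δ) (hR : 0 ≤ R) :
    let KL : (X → ℝ) → ℝ := fun qX => ∑ x, qX x * Real.log (qX x / P x)
    let I : (X → ℝ) → (X → Y → ℝ) → ℝ := fun qX k =>
      ∑ x, ∑ y, qX x * k x y * Real.log (k x y / ∑ x', qX x' * k x' y)
    let RD : (X → ℝ) → ℝ := fun qX => sInf {v | ∃ k : X → Y → ℝ,
      (∀ x y, 0 ≤ k x y) ∧ (∀ x, ∑ y, k x y = 1) ∧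
      (∑ x, ∑ y, qX x * k x y * d x y) ≤ Δ ∧ v = I qX k}
    sInf {v | ∃ qX : X → ℝ, (∀ x, 0 ≤ qX x) ∧ (∑ x, qX x = 1) ∧
        v = KL qX + max (RD qX - R) 0} =
      sInf {v | ∃ q : X → Y → ℝ, (∀ x y, 0 ≤ q x y) ∧ (∑ x, ∑ y, q x y = 1) ∧
        (∑ x, ∑ y, q x y * d x y) ≤ Δ ∧
        v = KL (fun x => ∑ y, q x y) +
          max ((∑ x, ∑ y, q x y *
            Real.log (q x y / ((∑ y', q x y') * (∑ x', q x' y)))) - R) 0} := by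
  intro KL I RD
  classical
  have hPle1 : ∀ x, P x ≤ 1 := fun x => by
    calc P x ≤ ∑ x', P x' := Finset.single_le_sum (fun i _ => hP0 i) (Finset.mem_univ x)
      _ = 1 := hP1
  -- lower bound for KL
  have hKL_lb : ∀ qX : X → ℝ, (∀ x, 0 ≤ qX x) → (∑ x, qX x) = 1 →
      -(Fintype.card X : ℝ) ≤ KL qX := by
    intro qX h0 h1
    show -(Fintype.card X : ℝ) ≤ ∑ x, qX x * Real.log (qX x / P x)
    calc -(Fintype.card X : ℝ) = ∑ _x : X, (-1 : ℝ) := by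
          simp [Finset.sum_const, Finset.card_univ]
      _ ≤ ∑ x, qX x * Real.log (qX x / P x) :=
          Finset.sum_le_sum fun x _ => term_lb1 _ _ (h0 x) (hP0 x) (hPle1 x)
  -- lower bound for I
  have hI_lb : ∀ (qX : X → ℝ) (k : X → Y → ℝ), (∀ x, 0 ≤ qX x) → (∑ x, qX x) = 1 →
      (∀ x y, 0 ≤ k x y) → (∀ x, ∑ y, k x y = 1) →
      -((Fintype.card X : ℝ) * (Fintype.card Y : ℝ)) ≤ I qX k := by
    intro qX k h0 h1 hk0 hk1
    have hqle1 : ∀ x, qX x ≤ 1 := fun x => by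
      calc qX x ≤ ∑ x', qX x' := Finset.single_le_sum (fun i _ => h0 i) (Finset.mem_univ x)
        _ = 1 := h1
    have hkle1 : ∀ x y, k x y ≤ 1 := fun x y => by
      calc k x y ≤ ∑ y', k x y' := Finset.single_le_sum (fun i _ => hk0 x i) (Finset.mem_univ y)
        _ = 1 := hk1 x
    show -((Fintype.card X : ℝ) * (Fintype.card Y : ℝ)) ≤
      ∑ x, ∑ y, qX x * k x y * Real.log (k x y / ∑ x', qX x' * k x' y)
    calc -((Fintype.card X : ℝ) * (Fintype.card Y : ℝ))
        = ∑ _x : X, ∑ _y : Y, (-1 : ℝ) := by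
          simp [Finset.sum_const, Finset.card_univ]
      _ ≤ _ := by
          refine Finset.sum_le_sum fun x _ => Finset.sum_le_sum fun y _ => ?_
          refine term_lb2 _ _ _ (h0 x) (hqle1 x) (hk0 x y) ?_ ?_
          · exact Finset.single_le_sum
              (f := fun x' => qX x' * k x' y)
              (fun i _ => mul_nonneg (h0 i) (hk0 i y)) (Finset.mem_univ x)
          · calc (∑ x', qX x' * k x' y) ≤ ∑ x', qX x' :=
                  Finset.sum_le_sum fun i _ =>
                    mul_le_of_le_one_right (h0 i) (hkle1 i y)
              _ = 1 := h1
  -- the default kernel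
  obtain ⟨y0, hy0⟩ : ∃ y0 : X → Y, ∀ x, d x (y0 x) = 0 :=
    ⟨fun x => (hd x).choose, fun x => (hd x).choose_spec⟩
  set k0 : X → Y → ℝ := fun x y => if y = y0 x then 1 else 0 with hk0def
  have hk0nn : ∀ x y, 0 ≤ k0 x y := by
    intro x y; simp only [k0]; split <;> norm_num
  have hk0sum : ∀ x, ∑ y, k0 x y = 1 := by
    intro x; simp [k0]
  have hk0d : ∀ qX : X → ℝ, (∑ x, ∑ y, qX x * k0 x y * d x y) ≤ Δ := by
    intro qX
    have h : (∑ x, ∑ y, qX x * k0 x y * d x y) = 0 := by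
      refine Finset.sum_eq_zero fun x _ => ?_
      simp [k0, mul_ite, ite_mul, Finset.sum_ite_eq', hy0 x]
    rw [h]; exact hΔ
  -- facts about the RD feasible sets
  have hSne : ∀ qX : X → ℝ, Set.Nonempty {v | ∃ k : X → Y → ℝ,
      (∀ x y, 0 ≤ k x y) ∧ (∀ x, ∑ y, k x y = 1) ∧
      (∑ x, ∑ y, qX x * k x y * d x y) ≤ Δ ∧ v = I qX k} :=
    fun qX => ⟨I qX k0, k0, hk0nn, hk0sum, hk0d qX, rfl⟩
  have hSbdd : ∀ qX : X → ℝ, (∀ x, 0 ≤ qX x) → (∑ x, qX x) = 1 →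
      BddBelow {v | ∃ k : X → Y → ℝ,
      (∀ x y, 0 ≤ k x y) ∧ (∀ x, ∑ y, k x y = 1) ∧
      (∑ x, ∑ y, qX x * k x y * d x y) ≤ Δ ∧ v = I qX k} := by
    intro qX h0 h1
    refine ⟨-((Fintype.card X : ℝ) * (Fintype.card Y : ℝ)), ?_⟩
    rintro v ⟨k, hk1, hk2, _, rfl⟩
    exact hI_lb qX k h0 h1 hk1 hk2
  -- bddBelow / nonempty for A and B
  have hAbdd : BddBelow {v | ∃ qX : X → ℝ, (∀ x, 0 ≤ qX x) ∧ (∑ x, qX x = 1) ∧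
      v = KL qX + max (RD qX - R) 0} := by
    refine ⟨-(Fintype.card X : ℝ), ?_⟩
    rintro v ⟨qX, h0, h1, rfl⟩
    have := hKL_lb qX h0 h1
    have h2 : (0:ℝ) ≤ max (RD qX - R) 0 := le_max_right _ _
    linarith
  have hBbdd : BddBelow {v | ∃ q : X → Y → ℝ, (∀ x y, 0 ≤ q x y) ∧ (∑ x, ∑ y, q x y = 1) ∧
      (∑ x, ∑ y, q x y * d x y) ≤ Δ ∧
      v = KL (fun x => ∑ y, q x y) +
        max ((∑ x, ∑ y, q x y *
          Real.log (q x y / ((∑ y', q x y') * (∑ x', q x' y)))) - R) 0} := by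
    refine ⟨-(Fintype.card X : ℝ), ?_⟩
    rintro v ⟨q, h0, h1, _, rfl⟩
    have := hKL_lb (fun x => ∑ y, q x y)
      (fun x => Finset.sum_nonneg fun y _ => h0 x y) h1
    have h2 : (0:ℝ) ≤ max ((∑ x, ∑ y, q x y *
        Real.log (q x y / ((∑ y', q x y') * (∑ x', q x' y)))) - R) 0 := le_max_right _ _
    linarith
  have hAne : Set.Nonempty {v | ∃ qX : X → ℝ, (∀ x, 0 ≤ qX x) ∧ (∑ x, qX x = 1) ∧
      v = KL qX + max (RD qX - R) 0} := ⟨_, P, hP0, hP1, rfl⟩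
  have hBne : Set.Nonempty {v | ∃ q : X → Y → ℝ, (∀ x y, 0 ≤ q x y) ∧ (∑ x, ∑ y, q x y = 1) ∧
      (∑ x, ∑ y, q x y * d x y) ≤ Δ ∧
      v = KL (fun x => ∑ y, q x y) +
        max ((∑ x, ∑ y, q x y *
          Real.log (q x y / ((∑ y', q x y') * (∑ x', q x' y)))) - R) 0} := by
    refine ⟨_, fun x y => P x * k0 x y, fun x y => mul_nonneg (hP0 x) (hk0nn x y), ?_, hk0d P, rfl⟩
    calc ∑ x, ∑ y, P x * k0 x y = ∑ x, P x := by
          refine Finset.sum_congr rfl fun x _ => ?_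
          rw [← Finset.mul_sum, hk0sum x, mul_one]
      _ = 1 := hP1
  refine le_antisymm (le_csInf hBne ?_) (le_csInf hAne ?_)
  · -- from a joint q build (marginal, kernel)
    rintro b ⟨q, hq0, hq1, hqd, rfl⟩
    set m : X → ℝ := fun x => ∑ y, q x y with hm
    have hm0 : ∀ x, 0 ≤ m x := fun x => Finset.sum_nonneg fun y _ => hq0 x y
    have hm1 : ∑ x, m x = 1 := hq1
    have hmz : ∀ x, m x = 0 → ∀ y, q x y = 0 := by
      intro x hx y
      exact (Finset.sum_eq_zero_iff_of_nonneg (fun y _ => hq0 x y)).1 hx y (Finset.mem_univ y)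
    set k : X → Y → ℝ := fun x y => if m x = 0 then k0 x y else q x y / m x with hkdef
    have hknn : ∀ x y, 0 ≤ k x y := by
      intro x y; simp only [k]; split
      · exact hk0nn x y
      · exact div_nonneg (hq0 x y) (hm0 x)
    have hksum : ∀ x, ∑ y, k x y = 1 := by
      intro x
      by_cases h : m x = 0
      · simp only [k, if_pos h]; exact hk0sum x
      · simp only [k, if_neg h]
        rw [← Finset.sum_div]
        exact div_self h
    have hkey : ∀ x y, m x * k x y = q x y := by
      intro x y
      by_cases h : m x = 0
      · rw [h, zero_mul, hmz x h y]
      · simp only [k, if_neg h]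
        rw [mul_comm, div_mul_cancel₀ _ h]
    have hdist : ∑ x, ∑ y, m x * k x y * d x y ≤ Δ := by
      calc ∑ x, ∑ y, m x * k x y * d x y = ∑ x, ∑ y, q x y * d x y := by
            refine Finset.sum_congr rfl fun x _ => Finset.sum_congr rfl fun y _ => ?_
            rw [hkey]
        _ ≤ Δ := hqd
    have hIeq : I m k = ∑ x, ∑ y, q x y *
        Real.log (q x y / ((∑ y', q x y') * (∑ x', q x' y))) := by
      show (∑ x, ∑ y, m x * k x y * Real.log (k x y / ∑ x', m x' * k x' y)) = _
      refine Finset.sum_congr rfl fun x _ => Finset.sum_congr rfl fun y _ => ?_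
      have hn : (∑ x', m x' * k x' y) = ∑ x', q x' y :=
        Finset.sum_congr rfl fun x' _ => hkey x' y
      rw [hn, hkey]
      by_cases h : m x = 0
      · rw [hmz x h y]; simp
      · have hk' : k x y = q x y / m x := if_neg h
        rw [hk', div_div]
    have hRDle : RD m ≤ ∑ x, ∑ y, q x y *
        Real.log (q x y / ((∑ y', q x y') * (∑ x', q x' y))) := by
      rw [← hIeq]
      exact csInf_le (hSbdd m hm0 hm1) ⟨k, hknn, hksum, hdist, rfl⟩
    refine le_trans (csInf_le hAbdd ⟨m, hm0, hm1, rfl⟩) ?_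
    have hKLeq : KL (fun x => ∑ y, q x y) = KL m := rfl
    rw [hKLeq]
    exact add_le_add le_rfl (max_le_max (sub_le_sub_right hRDle R) le_rfl)
  · -- from qX and near-optimal kernel build joint
    rintro a ⟨qX, h0, h1, rfl⟩
    refine le_of_forall_pos_le_add ?_
    intro ε hε
    obtain ⟨s, hs, hslt⟩ := Real.lt_sInf_add_pos (hSne qX) hε
    obtain ⟨k, hk1, hk2, hk3, rfl⟩ := hs
    have hslt' : I qX k < RD qX + ε := hslt
    set q : X → Y → ℝ := fun x y => qX x * k x y with hq
    have hrow : ∀ x, ∑ y, q x y = qX x := by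
      intro x
      simp only [q]
      rw [← Finset.mul_sum, hk2 x, mul_one]
    have htot : ∑ x, ∑ y, q x y = 1 :=
      (Finset.sum_congr rfl fun x _ => hrow x).trans h1
    have hIj : (∑ x, ∑ y, q x y *
        Real.log (q x y / ((∑ y', q x y') * (∑ x', q x' y)))) = I qX k := by
      show _ = ∑ x, ∑ y, qX x * k x y * Real.log (k x y / ∑ x', qX x' * k x' y)
      refine Finset.sum_congr rfl fun x _ => Finset.sum_congr rfl fun y _ => ?_
      rw [hrow x]
      have hcol : (∑ x', q x' y) = ∑ x', qX x' * k x' y :=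
        Finset.sum_congr rfl fun x' _ => rfl
      rw [hcol]
      simp only [q]
      by_cases h : qX x = 0
      · simp [h]
      · rw [mul_div_mul_left _ _ h]
    have hmemB : KL (fun x => ∑ y, q x y) +
        max ((∑ x, ∑ y, q x y *
          Real.log (q x y / ((∑ y', q x y') * (∑ x', q x' y)))) - R) 0 ∈
        {v | ∃ q : X → Y → ℝ, (∀ x y, 0 ≤ q x y) ∧ (∑ x, ∑ y, q x y = 1) ∧
          (∑ x, ∑ y, q x y * d x y) ≤ Δ ∧
          v = KL (fun x => ∑ y, q x y) +
            max ((∑ x, ∑ y, q x y *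
              Real.log (q x y / ((∑ y', q x y') * (∑ x', q x' y)))) - R) 0} :=
      ⟨q, fun x y => mul_nonneg (h0 x) (hk1 x y), htot, hk3, rfl⟩
    have hKLeq : KL (fun x => ∑ y, q x y) = KL qX := by
      have h : (fun x => ∑ y, q x y) = qX := funext hrow
      rw [h]
    calc sInf _ ≤ KL (fun x => ∑ y, q x y) +
          max ((∑ x, ∑ y, q x y *
            Real.log (q x y / ((∑ y', q x y') * (∑ x', q x' y)))) - R) 0 :=
          csInf_le hBbdd hmemB
      _ = KL qX + max (I qX k - R) 0 := by rw [hKLeq, hIj]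
      _ ≤ KL qX + max (RD qX - R) 0 + ε := by
          have hmax : max (I qX k - R) 0 ≤ max (RD qX - R) 0 + ε := by
            apply max_le
            · have := le_max_left (RD qX - R) 0
              linarith
            · have := le_max_right (RD qX - R) 0
              linarith
          linarith
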